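/- Let m ≥ 3 be a natural number. Then for every real r ≥ 1, (r − 1) · ∫_{(r−1)/(r+1)}^{1} (1 − x²)^m dx ≤ 1/(m − 1). -/

import Mathlib

set_option maxHeartbeats 1000000 in
/-- Bound on $(r-1)\int_{(r-1)/(r+1)}^1 (1-x^2)^m dx$ for $m \ge 3$. -/
theorem stmt_7 (m : ℕ) (hm : 3 ≤ m) (r : ℝ) (hr : 1 ≤ r) :
    (r - 1) * ∫ x in ((r - 1) / (r + 1))..(1 : ℝ), (1 - x ^ 2) ^ m
      ≤ 1 / ((m : ℝ) - 1) := by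
  obtain ⟨M, hMdef⟩ : ∃ M : ℝ, M = (m : ℝ) := ⟨_, rfl⟩
  rw [show ((m:ℝ) - 1) = M - 1 by rw [hMdef]]
  have hM : (3 : ℝ) ≤ M := by rw [hMdef]; exact_mod_cast hm
  rcases eq_or_lt_of_le hr with hr1 | hr1
  · rw [← hr1]
    rw [show (1:ℝ) - 1 = 0 by norm_num, zero_mul]
    apply div_nonneg (by norm_num)
    linarith
  -- now r > 1
  have hrp : (0:ℝ) < r + 1 := by linarith
  obtain ⟨a, ha⟩ : ∃ a : ℝ, a = (r - 1) / (r + 1) := ⟨_, rfl⟩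
  rw [show (r - 1) / (r + 1) = a from ha.symm]
  have ha0 : 0 < a := by
    rw [ha]
    apply div_pos <;> linarith
  have ha1 : a < 1 := by
    rw [ha, div_lt_one hrp]; linarith
  have hra : r - 1 = a * (r + 1) := by
    rw [ha, div_mul_cancel₀ _ hrp.ne']
  have hr1a : (r + 1) * (1 - a) = 2 := by
    field_simp [ha]; linear_combination hra
  -- nonnegativity of integrand on [a,1]
  have hnn : ∀ x ∈ Set.Icc a 1, (0:ℝ) ≤ (1 - x ^ 2) ^ m := by
    intro x hx
    have h1 : -1 ≤ x := by linarith [ha0.le, hx.1]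
    have h2 : x ≤ 1 := hx.2
    have : 0 ≤ 1 - x ^ 2 := by nlinarith
    positivity
  -- integrability
  have hint1 : IntervalIntegrable (fun x : ℝ => a * (1 - x ^ 2) ^ m) MeasureTheory.volume a 1 := by
    apply Continuous.intervalIntegrable; fun_prop
  have hint2 : IntervalIntegrable (fun x : ℝ => x * (1 - x ^ 2) ^ m) MeasureTheory.volume a 1 := by
    apply Continuous.intervalIntegrable; fun_prop
  -- a * I ≤ ∫ x * (1-x²)^m
  have hmono : a * ∫ x in a..(1:ℝ), (1 - x ^ 2) ^ m
      ≤ ∫ x in a..(1:ℝ), x * (1 - x ^ 2) ^ m := by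
    rw [← intervalIntegral.integral_const_mul]
    apply intervalIntegral.integral_mono_on ha1.le hint1 hint2
    intro x hx
    exact mul_le_mul_of_nonneg_right hx.1 (hnn x hx)
  -- compute ∫ x * (1-x²)^m
  have hd : ∀ x : ℝ, HasDerivAt (fun y : ℝ => -(1 - y ^ 2) ^ (m + 1) / (2 * (M + 1)))
      (x * (1 - x ^ 2) ^ m) x := by
    intro x
    have h1 : HasDerivAt (fun y : ℝ => 1 - y ^ 2) (-(2 * x)) x := by
      simpa using ((hasDerivAt_pow 2 x).const_sub 1)
    have h2 : HasDerivAt (fun y : ℝ => (1 - y ^ 2) ^ (m + 1))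
        (↑(m + 1) * (1 - x ^ 2) ^ (m + 1 - 1) * -(2 * x)) x := h1.pow (m + 1)
    have h3 : HasDerivAt (fun y : ℝ => -(1 - y ^ 2) ^ (m + 1) / (2 * (M + 1)))
        (-(↑(m + 1) * (1 - x ^ 2) ^ (m + 1 - 1) * -(2 * x)) / (2 * (M + 1))) x :=
      h2.neg.div_const (2 * (M + 1))
    convert h3 using 1
    have hMpos : (0:ℝ) < M + 1 := by linarith
    simp only [Nat.add_sub_cancel]
    push_cast
    field_simp
    rw [hMdef]
  have hJ : ∫ x in a..(1:ℝ), x * (1 - x ^ 2) ^ m = (1 - a ^ 2) ^ (m + 1) / (2 * (M + 1)) := by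
    rw [intervalIntegral.integral_eq_sub_of_hasDerivAt (fun x _ => hd x) hint2]
    have : (1 : ℝ) - 1 ^ 2 = 0 := by ring
    rw [this]
    rw [zero_pow (Nat.succ_ne_zero m)]
    ring
  -- key algebraic inequality
  have haa : (0:ℝ) ≤ 1 - a ^ 2 := by nlinarith
  have hP : (0:ℝ) ≤ (1 - a ^ 2) ^ m := by positivity
  have hbern : 1 + M * a ^ 2 ≤ (1 + a ^ 2) ^ m := by
    have := one_add_mul_le_pow (a := a ^ 2) (by nlinarith) m
    simpa [hMdef] using this
  have hprod : (1 + a ^ 2) ^ m * (1 - a ^ 2) ^ m ≤ 1 := by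
    rw [← mul_pow]
    have h4 : (1 + a ^ 2) * (1 - a ^ 2) = 1 - a ^ 4 := by ring
    rw [h4]
    apply pow_le_one₀ (by nlinarith) (by nlinarith)
  have h1 : (1 + M * a ^ 2) * (1 - a ^ 2) ^ m ≤ 1 :=
    le_trans (mul_le_mul_of_nonneg_right hbern hP) hprod
  have h4M : (0:ℝ) < 4 * M * (M + 1) := by nlinarith
  have hQ' : 0 ≤ 4 * M * (M + 1) * ((M + 1) * (1 + M * a ^ 2) - (M - 1) * (1 + a)) := by
    nlinarith [sq_nonneg ((M - 1) - 2 * M * (M + 1) * a), hM]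
  have hQ : (M - 1) * (1 + a) ≤ (M + 1) * (1 + M * a ^ 2) := by
    nlinarith [hQ', h4M]
  have hkey : (M - 1) * ((1 - a ^ 2) ^ m * (1 + a)) ≤ M + 1 := by
    nlinarith [mul_le_mul_of_nonneg_right hQ hP, mul_le_mul_of_nonneg_left h1 (by linarith : (0:ℝ) ≤ M + 1), hP, ha0.le]
  -- put it together
  have hstep : (r - 1) * ∫ x in a..(1:ℝ), (1 - x ^ 2) ^ m
      ≤ (r + 1) * ((1 - a ^ 2) ^ (m + 1) / (2 * (M + 1))) := by
    calc (r - 1) * ∫ x in a..(1:ℝ), (1 - x ^ 2) ^ m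
        = (r + 1) * (a * ∫ x in a..(1:ℝ), (1 - x ^ 2) ^ m) := by rw [hra]; ring
      _ ≤ (r + 1) * ∫ x in a..(1:ℝ), x * (1 - x ^ 2) ^ m :=
          mul_le_mul_of_nonneg_left hmono hrp.le
      _ = (r + 1) * ((1 - a ^ 2) ^ (m + 1) / (2 * (M + 1))) := by rw [hJ]
  refine le_trans hstep ?_
  -- (r+1)*(1-a²)^{m+1}/(2(M+1)) = (1-a²)^m (1+a) / (M+1) ≤ 1/(M-1)
  have hfac : (r + 1) * ((1 - a ^ 2) ^ (m + 1) / (2 * (M + 1)))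
      = (1 - a ^ 2) ^ m * (1 + a) / (M + 1) := by
    have h5 : (1 - a ^ 2) ^ (m + 1) = (1 - a ^ 2) ^ m * ((1 - a) * (1 + a)) := by
      rw [pow_succ]; ring
    rw [h5]
    have hM1 : (M + 1) ≠ 0 := by linarith
    field_simp
    linear_combination (1 - a ^ 2) ^ m * hr1a
  rw [hfac]
  rw [div_le_div_iff₀ (by linarith) (by linarith)]
  nlinarith [hkey]
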